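/- Let G act on a compact metrizable space M as a convergence group and let H be a subgroup of G with limit set ΛH. Then H is dynamically quasi-convex (for all disjoint closed subsets K, L of M, the set {gH ∈ G/H : gΛH ∩ K ≠ ∅ and gΛH ∩ L ≠ ∅} is finite) if and only if for every sequence (g_n) lying in pairwise distinct left cosets of H there is a subsequence (g_{σ(n)}) such that g_{σ(n)}·ΛH converges uniformly to a single point of M. -/

import Mathlib

open Filter Topology Pointwise

def ConvergenceAction (G M : Type*) [Group G] [MetricSpace M] [MulAction G M] : Prop :=
  ∀ γ : ℕ → G, Function.Injective γ →
    ∃ σ : ℕ → ℕ, StrictMono σ ∧ ∃ ξ η : M,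
      ∀ K : Set M, IsCompact K → η ∉ K →
        TendstoUniformlyOn (fun n x => γ (σ n) • x) (fun _ => ξ) atTop K

def IsLimitSet {G : Type*} (M : Type*) [Group G] [MetricSpace M] [MulAction G M]
    (P : Subgroup G) (Λ : Set M) : Prop :=
  Λ.Nonempty ∧ IsClosed Λ ∧ (∀ g ∈ P, ∀ x ∈ Λ, g • x ∈ Λ) ∧
    ∀ Λ' : Set M, Λ'.Nonempty → IsClosed Λ' → (∀ g ∈ P, ∀ x ∈ Λ', g • x ∈ Λ') → Λ' ⊆ Λ →
      Λ' = Λ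

/-- A subgroup `H` with limit set `ΛH` is dynamically quasi-convex iff for every sequence
lying in pairwise distinct left cosets of `H` there is a subsequence whose translates of
`ΛH` converge uniformly to a single point. -/
theorem dynamically_quasiconvex_iff_cosets_converge
    (G M : Type*) [Group G] [MetricSpace M] [CompactSpace M] [MulAction G M]
    (hconv : ConvergenceAction G M)
    (H : Subgroup G) (ΛH : Set M) (hΛ : IsLimitSet M H ΛH) :
    (∀ K L : Set M, IsClosed K → IsClosed L → Disjoint K L →
        Set.Finite ((QuotientGroup.mk (s := H)) ''
          {g : G | (g • ΛH ∩ K).Nonempty ∧ (g • ΛH ∩ L).Nonempty})) ↔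
    (∀ g : ℕ → G, (∀ m n : ℕ, m ≠ n → (g m)⁻¹ * g n ∉ H) →
        ∃ σ : ℕ → ℕ, StrictMono σ ∧ ∃ p : M,
          ∀ U ∈ nhds p, ∀ᶠ n in atTop, g (σ n) • ΛH ⊆ U) := by
  obtain ⟨hΛne, hΛcl, hΛinv, hΛmin⟩ := hΛ
  constructor
  · -- quasiconvex → coset convergence
    intro hqc g hg
    have hginj : Function.Injective g := by
      intro m n hmn
      by_contra hne
      exact hg m n hne (by rw [hmn]; simpa using H.one_mem)
    have hmkinj : Function.Injective (fun n => (QuotientGroup.mk (g n) : G ⧸ H)) := by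
      intro m n hmn
      by_contra hne
      exact hg m n hne (QuotientGroup.eq.mp hmn)
    obtain ⟨σ, hσ, ξ, η, huc⟩ := hconv g hginj
    by_cases hy : ∃ y ∈ ΛH, y ≠ η
    · obtain ⟨y, hyΛ, hyη⟩ := hy
      -- g (σ n) • y → ξ
      have hy_tendsto : Tendsto (fun n => g (σ n) • y) atTop (𝓝 ξ) := by
        have h1 := huc {y} isCompact_singleton
          (fun h => hyη (Set.mem_singleton_iff.mp h).symm)
        rw [Metric.tendstoUniformlyOn_iff] at h1
        rw [Metric.tendsto_atTop]
        intro ε hε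
        obtain ⟨N, hN⟩ := Filter.eventually_atTop.mp (h1 ε hε)
        exact ⟨N, fun n hn => by simpa [dist_comm] using hN n hn y rfl⟩
      by_cases hP : ∀ U ∈ nhds ξ, ∀ᶠ n in atTop, g (σ n) • ΛH ⊆ U
      · exact ⟨σ, hσ, ξ, hP⟩
      · push_neg at hP
        obtain ⟨U, hU, hnotev⟩ := hP
        have freq : ∃ᶠ n in atTop, ∃ x ∈ ΛH, g (σ n) • x ∉ U := by
          refine hnotev.mono fun n hn => ?_
          obtain ⟨z, hz, hzU⟩ := Set.not_subset.mp hn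
          obtain ⟨x, hx, rfl⟩ := Set.mem_smul_set.mp hz
          exact ⟨x, hx, hzU⟩
        obtain ⟨τ, hτ, hτx⟩ := Filter.extraction_of_frequently_atTop freq
        choose x hxΛ hxU using hτx
        obtain ⟨q, -, φ, hφ, hqt⟩ :=
          isCompact_univ.tendsto_subseq (x := fun n => g (σ (τ n)) • x n)
            (fun n => Set.mem_univ _)
        have hξU : ξ ∈ interior U := mem_interior_iff_mem_nhds.mpr hU
        have hqcompl : q ∈ (interior U)ᶜ := by
          refine isOpen_interior.isClosed_compl.mem_of_tendsto hqt
            (Filter.Eventually.of_forall fun n hmem => ?_)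
          exact hxU (φ n) (interior_subset hmem)
        have hqξ : q ≠ ξ := fun h => hqcompl (h ▸ hξU)
        have hd : (0:ℝ) < dist ξ q := dist_pos.mpr fun h => hqξ h.symm
        set r : ℝ := dist ξ q / 3 with hr_def
        have hr : 0 < r := by positivity
        have hdisj : Disjoint (Metric.closedBall ξ r) (Metric.closedBall q r) := by
          rw [Set.disjoint_left]
          intro z hzK hzL
          rw [Metric.mem_closedBall] at hzK hzL
          have h1 : dist ξ q ≤ dist ξ z + dist z q := dist_triangle _ _ _
          rw [dist_comm ξ z] at h1
          have : dist ξ q ≤ 2 * r := by linarith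
          rw [hr_def] at this
          linarith
        -- eventually the translates meet both balls
        have hyc : Tendsto (fun n => g (σ (τ (φ n))) • y) atTop (𝓝 ξ) :=
          hy_tendsto.comp ((hτ.comp hφ).tendsto_atTop)
        have hA : ∀ᶠ n in atTop, g (σ (τ (φ n))) • y ∈ Metric.closedBall ξ r :=
          hyc.eventually_mem (Metric.closedBall_mem_nhds _ hr)
        have hB : ∀ᶠ n in atTop,
            g (σ (τ (φ n))) • x (φ n) ∈ Metric.closedBall q r :=
          hqt.eventually_mem (Metric.closedBall_mem_nhds _ hr)
        obtain ⟨N, hN⟩ := Filter.eventually_atTop.mp (hA.and hB)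
        have hidx : StrictMono (fun k : ℕ => σ (τ (φ (N + k)))) := by
          intro a b hab
          exact hσ (hτ (hφ (by omega)))
        have hfin := hqc (Metric.closedBall ξ r) (Metric.closedBall q r)
          Metric.isClosed_closedBall Metric.isClosed_closedBall hdisj
        refine absurd hfin ?_
        have hinf : Set.Infinite ((QuotientGroup.mk (s := H)) ''
            {g : G | (g • ΛH ∩ Metric.closedBall ξ r).Nonempty ∧
              (g • ΛH ∩ Metric.closedBall q r).Nonempty}) := by
          refine Set.infinite_of_injective_forall_mem
            (f := fun k : ℕ => (QuotientGroup.mk (g (σ (τ (φ (N + k))))) : G ⧸ H)) ?_ ?_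
          · exact hmkinj.comp hidx.injective
          · intro k
            refine ⟨g (σ (τ (φ (N + k)))), ⟨?_, ?_⟩, rfl⟩
            · exact ⟨_, Set.smul_mem_smul_set hyΛ, (hN (N + k) (by omega)).1⟩
            · exact ⟨_, Set.smul_mem_smul_set (hxΛ (φ (N + k))), (hN (N + k) (by omega)).2⟩
        exact hinf
    · -- ΛH = {η}
      push_neg at hy
      obtain ⟨z, hz⟩ := hΛne
      obtain ⟨q, -, φ, hφ, hqt⟩ :=
        isCompact_univ.tendsto_subseq (x := fun n => g (σ n) • η)
          (fun n => Set.mem_univ _)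
      refine ⟨σ ∘ φ, hσ.comp hφ, q, fun U hU => ?_⟩
      filter_upwards [hqt.eventually_mem hU] with n hn w hw
      obtain ⟨x, hx, rfl⟩ := Set.mem_smul_set.mp hw
      rwa [hy x hx]
  · -- coset convergence → quasiconvex
    intro h K L hK hL hKL
    by_contra hinf
    have hinf' : Set.Infinite ((QuotientGroup.mk (s := H)) ''
        {g : G | (g • ΛH ∩ K).Nonempty ∧ (g • ΛH ∩ L).Nonempty}) := hinf
    let e := hinf'.natEmbedding
    have hsel : ∀ n : ℕ, ∃ a : G,
        ((a • ΛH ∩ K).Nonempty ∧ (a • ΛH ∩ L).Nonempty) ∧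
          (QuotientGroup.mk a : G ⧸ H) = (e n : G ⧸ H) := fun n => (e n).2
    choose g hgS hgmk using hsel
    have hdist : ∀ m n : ℕ, m ≠ n → (g m)⁻¹ * g n ∉ H := by
      intro m n hmn hmem
      apply hmn
      apply e.injective
      apply Subtype.coe_injective
      show ((e m : G ⧸ H)) = (e n : G ⧸ H)
      rw [← hgmk m, ← hgmk n]
      exact QuotientGroup.eq.mpr hmem
    obtain ⟨σ, hσ, p, hp⟩ := h g hdist
    have hpKL : p ∉ K ∨ p ∉ L := by
      by_contra hc
      push_neg at hc
      exact Set.disjoint_left.mp hKL hc.1 hc.2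
    rcases hpKL with hpK | hpL
    · obtain ⟨n, hn⟩ := (hp Kᶜ (hK.isOpen_compl.mem_nhds hpK)).exists
      obtain ⟨w, hw1, hw2⟩ := (hgS (σ n)).1
      exact hn hw1 hw2
    · obtain ⟨n, hn⟩ := (hp Lᶜ (hL.isOpen_compl.mem_nhds hpL)).exists
      obtain ⟨w, hw1, hw2⟩ := (hgS (σ n)).2
      exact hn hw1 hw2
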